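/- For every real ν > -1/2, the characteristic function φ_ν(t) := h_ν(−t²/4)/h_ν(t²/4) (equal to J_ν(t)/I_ν(t)) is self-reciprocal in van Dantzig's sense: its entire extension F(z) := h_ν(−z²/4)/h_ν(z²/4) satisfies F(t)·F(it) = 1 for every t ∈ ℝ with h_ν(−t²/4) ≠ 0. Moreover, any probability measure on ℝ with characteristic function φ_ν is not infinitely divisible. -/

import Mathlib

open MeasureTheory

/-- Characteristic function of a measure on ℝ: `t ↦ ∫ e^{itx} dμ(x)`. -/
noncomputable def charFn (μ : Measure ℝ) (t : ℝ) : ℂ :=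
  ∫ x, Complex.exp (t * x * Complex.I) ∂μ

/-- `h_ν(u) = ∑_{k=0}^∞ u^k / (k! Γ(ν+k+1))`. -/
noncomputable def hnu (ν : ℝ) (u : ℝ) : ℝ :=
  ∑' k : ℕ, u ^ k / (Nat.factorial k * Real.Gamma (ν + k + 1))

/-- `B_ν(t) = 1/(Γ(ν+1) h_ν(t²/4)) = t^ν/(2^ν Γ(ν+1) I_ν(t))`. -/
noncomputable def Bnu (ν : ℝ) (t : ℝ) : ℝ :=
  1 / (Real.Gamma (ν + 1) * hnu ν (t ^ 2 / 4))

/-- `b_ν(t) = exp(−(t²/2)·h_{ν+1}(t²/4)/h_ν(t²/4)) = exp(−t·I_{ν+1}(t)/I_ν(t))`. -/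
noncomputable def bnu (ν : ℝ) (t : ℝ) : ℝ :=
  Real.exp (-(t ^ 2 / 2) * hnu (ν + 1) (t ^ 2 / 4) / hnu ν (t ^ 2 / 4))

/-- The `n`-fold convolution power of a measure on ℝ. -/
noncomputable def convPow (ρ : Measure ℝ) : ℕ → Measure ℝ
  | 0 => Measure.dirac 0
  | n + 1 => (convPow ρ n).conv ρ

/-- A probability measure on ℝ is infinitely divisible if for every `n ≥ 1` it is the
`n`-fold convolution of some probability measure. -/
def InfDivisible (μ : Measure ℝ) : Prop :=
  ∀ n : ℕ, 1 ≤ n → ∃ ρ : Measure ℝ, IsProbabilityMeasure ρ ∧ convPow ρ n = μ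

/-- Complex (entire) version of `h_ν`: `h_ν(u) = ∑_{k=0}^∞ u^k / (k! Γ(ν+k+1))` for `u ∈ ℂ`. -/
noncomputable def hnuC (ν : ℝ) (u : ℂ) : ℂ :=
  ∑' k : ℕ, u ^ k / ((Nat.factorial k : ℂ) * (Real.Gamma (ν + k + 1) : ℂ))

/-- The entire extension `F(z) = h_ν(−z²/4)/h_ν(z²/4)` of `φ_ν = J_ν/I_ν`. -/
noncomputable def Fext (ν : ℝ) (z : ℂ) : ℂ :=
  hnuC ν (-z ^ 2 / 4) / hnuC ν (z ^ 2 / 4)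



lemma exp_norm_one (t x : ℝ) : ‖Complex.exp (t * x * Complex.I)‖ = 1 := by
  rw [Complex.norm_exp]
  have : ((t:ℂ) * x * Complex.I).re = 0 := by simp
  rw [this, Real.exp_zero]

lemma charFn_norm_le_one (ρ : Measure ℝ) [IsProbabilityMeasure ρ] (t : ℝ) :
    ‖charFn ρ t‖ ≤ 1 := by
  rw [charFn]
  refine le_trans (norm_integral_le_integral_norm _) ?_
  simp only [exp_norm_one]
  simp

lemma charFn_conv (ρ₁ ρ₂ : Measure ℝ) [IsProbabilityMeasure ρ₁] [IsProbabilityMeasure ρ₂]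
    (t : ℝ) : charFn (ρ₁.conv ρ₂) t = charFn ρ₁ t * charFn ρ₂ t := by
  rw [charFn, Measure.conv]
  rw [integral_map (by fun_prop : AEMeasurable (fun p : ℝ × ℝ => p.1 + p.2) (ρ₁.prod ρ₂))
    (Continuous.aestronglyMeasurable (by fun_prop))]
  have h : ∀ p : ℝ × ℝ, Complex.exp (↑t * ↑(p.1 + p.2) * Complex.I)
      = Complex.exp (↑t * ↑p.1 * Complex.I) * Complex.exp (↑t * ↑p.2 * Complex.I) := by
    intro p; rw [← Complex.exp_add]; congr 1; push_cast; ring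
  simp_rw [h]
  rw [integral_prod_mul (fun x : ℝ => Complex.exp (↑t * ↑x * Complex.I))
    (fun x : ℝ => Complex.exp (↑t * ↑x * Complex.I))]
  rfl

lemma convPow_isProb (ρ : Measure ℝ) [IsProbabilityMeasure ρ] :
    ∀ n, IsProbabilityMeasure (convPow ρ n)
  | 0 => by rw [convPow]; infer_instance
  | n+1 => by
      rw [convPow]
      haveI := convPow_isProb ρ n
      infer_instance

lemma charFn_convPow (ρ : Measure ℝ) [IsProbabilityMeasure ρ] (n : ℕ) (t : ℝ) :
    charFn (convPow ρ n) t = (charFn ρ t) ^ n := by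
  induction n with
  | zero =>
    rw [convPow, pow_zero, charFn, integral_dirac]
    norm_num
  | succ n ih =>
    haveI := convPow_isProb ρ n
    rw [convPow, charFn_conv, ih, pow_succ]

lemma exp_prod_integrable (ρ : Measure ℝ) [IsProbabilityMeasure ρ] (θ : ℝ) :
    Integrable (fun p : ℝ × ℝ => Complex.exp (↑(θ * (p.1 - p.2)) * Complex.I)) (ρ.prod ρ) := by
  apply Integrable.mono' (integrable_const (1:ℝ))
  · exact Continuous.aestronglyMeasurable (by fun_prop)
  · filter_upwards with p
    apply le_of_eq
    rw [Complex.norm_exp]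
    simp

lemma cos_integrable (ρ : Measure ℝ) [IsProbabilityMeasure ρ] (θ : ℝ) :
    Integrable (fun p : ℝ × ℝ => Real.cos (θ * (p.1 - p.2))) (ρ.prod ρ) := by
  apply Integrable.mono' (integrable_const (1:ℝ))
  · exact Continuous.aestronglyMeasurable (by fun_prop)
  · filter_upwards with p
    rw [Real.norm_eq_abs]
    exact Real.abs_cos_le_one _

lemma charFn_normSq (ρ : Measure ℝ) [IsProbabilityMeasure ρ] (θ : ℝ) :
    ‖charFn ρ θ‖ ^ 2 = ∫ p : ℝ × ℝ, Real.cos (θ * (p.1 - p.2)) ∂(ρ.prod ρ) := by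
  have hconj : (starRingEnd ℂ) (charFn ρ θ) = ∫ x, Complex.exp (-(↑θ * ↑x * Complex.I)) ∂ρ := by
    rw [charFn, ← integral_conj]
    congr 1; funext x
    rw [← Complex.exp_conj]
    congr 1
    simp [Complex.conj_I, Complex.conj_ofReal]
  have hprod : charFn ρ θ * (starRingEnd ℂ) (charFn ρ θ)
      = ∫ p : ℝ × ℝ, Complex.exp (↑(θ * (p.1 - p.2)) * Complex.I) ∂(ρ.prod ρ) := by
    rw [hconj]
    nth_rewrite 1 [charFn]
    rw [← integral_prod_mul (fun x : ℝ => Complex.exp (↑θ * ↑x * Complex.I))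
      (fun x : ℝ => Complex.exp (-(↑θ * ↑x * Complex.I)))]
    congr 1; funext p
    rw [← Complex.exp_add]; congr 1; push_cast; ring
  have hnorm : (‖charFn ρ θ‖ ^ 2 : ℝ) = (charFn ρ θ * (starRingEnd ℂ) (charFn ρ θ)).re := by
    rw [Complex.mul_conj, Complex.ofReal_re, Complex.normSq_eq_norm_sq]
  have hre := integral_re (exp_prod_integrable ρ θ)
  simp only [RCLike.re_to_complex] at hre
  rw [hnorm, hprod, ← hre]
  apply integral_congr_ae
  filter_upwards with p
  rw [Complex.exp_ofReal_mul_I_re]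

lemma charFn_double_ineq (ρ : Measure ℝ) [IsProbabilityMeasure ρ] (t : ℝ) :
    1 - ‖charFn ρ (2*t)‖^2 ≤ 4 * (1 - ‖charFn ρ t‖^2) := by
  rw [charFn_normSq, charFn_normSq]
  have h1 := cos_integrable ρ (2*t)
  have h2 := cos_integrable ρ t
  have key : ∫ p : ℝ×ℝ, (4 * Real.cos (t*(p.1-p.2)) - Real.cos ((2*t)*(p.1-p.2))) ∂(ρ.prod ρ)
      ≤ ∫ _ : ℝ×ℝ, (3:ℝ) ∂(ρ.prod ρ) := by
    apply integral_mono ((h2.const_mul 4).sub h1) (integrable_const 3)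
    intro p
    simp only [Pi.sub_apply]
    have hcos : Real.cos ((2*t)*(p.1-p.2)) = 2 * Real.cos (t*(p.1-p.2))^2 - 1 := by
      rw [show (2*t)*(p.1-p.2) = 2*(t*(p.1-p.2)) by ring, Real.cos_two_mul]
    simp only [hcos]
    nlinarith [Real.neg_one_le_cos (t*(p.1-p.2)), Real.cos_le_one (t*(p.1-p.2))]
  rw [integral_sub (h2.const_mul 4) h1, integral_const_mul] at key
  simp only [integral_const, probReal_univ, measure_univ, ENNReal.toReal_one, smul_eq_mul, one_mul] at key
  linarith


lemma gamma_arg_pos {ν : ℝ} (hν : -1 < ν) (k : ℕ) : 0 < ν + k + 1 := by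
  have : (0:ℝ) ≤ k := Nat.cast_nonneg k
  linarith

lemma gamma_pos {ν : ℝ} (hν : -1 < ν) (k : ℕ) : 0 < Real.Gamma (ν + k + 1) :=
  Real.Gamma_pos_of_pos (gamma_arg_pos hν k)

lemma gamma_lb {ν : ℝ} (hν : -1 < ν) (k : ℕ) :
    min (Real.Gamma (ν + 1)) (Real.Gamma (ν + 2)) ≤ Real.Gamma (ν + k + 1) := by
  induction k with
  | zero => simpa using min_le_left _ _
  | succ k ih =>
    rcases Nat.eq_zero_or_pos k with hk | hk
    · subst hk
      rw [show ν + ((0:ℕ)+1:ℕ) + 1 = ν + 2 by push_cast; ring]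
      exact min_le_right _ _
    · have h1 : (1:ℝ) ≤ ν + k + 1 := by
        have : (1:ℝ) ≤ k := by exact_mod_cast hk
        linarith
      have h2 : Real.Gamma (ν + (k+1:ℕ) + 1) = (ν + k + 1) * Real.Gamma (ν + k + 1) := by
        rw [show ν + ((k+1:ℕ):ℝ) + 1 = (ν + k + 1) + 1 by push_cast; ring]
        exact Real.Gamma_add_one (by linarith)
      rw [h2]
      calc min (Real.Gamma (ν + 1)) (Real.Gamma (ν + 2)) ≤ Real.Gamma (ν + k + 1) := ih
        _ ≤ (ν + k + 1) * Real.Gamma (ν + k + 1) := le_mul_of_one_le_left (gamma_pos hν k).le h1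

lemma hnu_summable {ν : ℝ} (hν : -1 < ν) (u : ℝ) :
    Summable (fun k : ℕ => u ^ k / (Nat.factorial k * Real.Gamma (ν + k + 1))) := by
  set c := min (Real.Gamma (ν + 1)) (Real.Gamma (ν + 2)) with hc
  have hcpos : 0 < c := lt_min (Real.Gamma_pos_of_pos (by linarith)) (Real.Gamma_pos_of_pos (by linarith))
  refine Summable.of_norm_bounded (g := fun k : ℕ => |u| ^ k / Nat.factorial k * (1 / c)) ?_ ?_
  · exact (Real.summable_pow_div_factorial |u|).mul_right _
  · intro k
    have hfac : (0:ℝ) < Nat.factorial k := by exact_mod_cast Nat.factorial_pos k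
    have hΓ : 0 < Real.Gamma (ν + k + 1) := gamma_pos hν k
    rw [Real.norm_eq_abs, abs_div, abs_pow, abs_of_pos (mul_pos hfac hΓ),
      mul_one_div, div_div]
    have hle : (Nat.factorial k : ℝ) * c ≤ Nat.factorial k * Real.Gamma (ν + k + 1) :=
      mul_le_mul_of_nonneg_left (gamma_lb hν k) hfac.le
    exact div_le_div_of_nonneg_left (pow_nonneg (abs_nonneg u) k) (by positivity) hle

lemma hnu_pos {ν : ℝ} (hν : -1 < ν) {u : ℝ} (hu : 0 ≤ u) : 0 < hnu ν u := by
  have h0 : (0:ℝ) < u ^ (0:ℕ) / (Nat.factorial 0 * Real.Gamma (ν + (0:ℕ) + 1)) := by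
    have := gamma_pos hν 0
    simp only [pow_zero, Nat.factorial_zero, Nat.cast_one, one_mul]
    positivity
  exact Summable.tsum_pos (hnu_summable hν u) (fun k => by
    have hΓ := gamma_pos hν k
    have hfac : (0:ℝ) < Nat.factorial k := by exact_mod_cast Nat.factorial_pos k
    exact div_nonneg (pow_nonneg hu k) (le_of_lt (mul_pos hfac hΓ))) 0 h0

lemma hnuC_ofReal (ν : ℝ) (x : ℝ) : hnuC ν (x : ℂ) = ((hnu ν x : ℝ) : ℂ) := by
  rw [hnuC, hnu, Complex.ofReal_tsum]
  congr 1; funext k; push_cast; ring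

lemma part1 {ν : ℝ} (hν : -1 < ν) (t : ℝ) (ht : hnu ν (-t ^ 2 / 4) ≠ 0) :
    Fext ν (t : ℂ) * Fext ν ((t : ℂ) * Complex.I) = 1 := by
  have hsq : ((t : ℂ) * Complex.I) ^ 2 = -(t:ℂ) ^ 2 := by
    rw [mul_pow, Complex.I_sq]; ring
  have hA : hnuC ν (-(t:ℂ) ^ 2 / 4) = ((hnu ν (-t ^ 2 / 4) : ℝ) : ℂ) := by
    rw [show (-(t:ℂ) ^ 2 / 4) = ((-t ^ 2 / 4 : ℝ) : ℂ) by push_cast; ring]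
    exact hnuC_ofReal ν _
  have hB : hnuC ν ((t:ℂ) ^ 2 / 4) = ((hnu ν (t ^ 2 / 4) : ℝ) : ℂ) := by
    rw [show ((t:ℂ) ^ 2 / 4) = ((t ^ 2 / 4 : ℝ) : ℂ) by push_cast; ring]
    exact hnuC_ofReal ν _
  have hBne : hnuC ν ((t:ℂ) ^ 2 / 4) ≠ 0 := by
    rw [hB]
    exact_mod_cast (hnu_pos hν (by positivity : (0:ℝ) ≤ t ^ 2 / 4)).ne'
  have hAne : hnuC ν (-(t:ℂ) ^ 2 / 4) ≠ 0 := by rw [hA]; exact_mod_cast ht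
  rw [Fext, Fext, hsq]
  rw [show -(-(t:ℂ)^2) / 4 = (t:ℂ)^2/4 by ring, show (-(t:ℂ)^2)/4 = -(t:ℂ)^2/4 by ring]
  rw [div_mul_div_comm, mul_comm]
  exact div_self (mul_ne_zero hBne hAne)


lemma real_exp_tsum (x : ℝ) : Real.exp x = ∑' k : ℕ, x ^ k / (Nat.factorial k) := by
  rw [Real.exp_eq_exp_ℝ, NormedSpace.exp_eq_tsum_div]

lemma shift_eq (b : ℝ) : (fun k : ℕ => ((k+1:ℕ):ℝ) * (b ^ (k+1) / (Nat.factorial (k+1))))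
    = fun k : ℕ => b * (b ^ k / Nat.factorial k) := by
  funext k
  have h1 : (Nat.factorial (k+1) : ℝ) = (k+1) * Nat.factorial k := by
    rw [Nat.factorial_succ]; push_cast; ring
  have h2 : (Nat.factorial k : ℝ) ≠ 0 := by exact_mod_cast (Nat.factorial_pos k).ne'
  have h3 : ((k:ℝ)+1) ≠ 0 := by positivity
  rw [h1]
  push_cast
  field_simp
  ring

lemma summable_mul_shift (b : ℝ) :
    Summable (fun k : ℕ => (k:ℝ) * (b ^ k / Nat.factorial k)) := by
  rw [← summable_nat_add_iff 1]
  have : (fun k : ℕ => ((k+1:ℕ):ℝ) * (b ^ (k+1) / (Nat.factorial (k+1)))) =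
      fun k : ℕ => b * (b ^ k / Nat.factorial k) := shift_eq b
  push_cast at this ⊢
  rw [this]
  exact (Real.summable_pow_div_factorial b).mul_left b

lemma tsum_mul_shift (b : ℝ) :
    ∑' k : ℕ, (k:ℝ) * (b ^ k / Nat.factorial k) = b * Real.exp b := by
  rw [Summable.tsum_eq_zero_add (summable_mul_shift b)]
  have h0 : ((0:ℕ):ℝ) * (b ^ (0:ℕ) / Nat.factorial 0) = 0 := by simp
  rw [h0, zero_add]
  have : ∀ k : ℕ, ((k+1:ℕ):ℝ) * (b ^ (k+1) / (Nat.factorial (k+1)))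
      = b * (b ^ k / Nat.factorial k) := fun k => congrFun (shift_eq b) k
  have h2 : ∑' k : ℕ, ((k:ℕ)+1:ℝ) * (b ^ (k+1) / (Nat.factorial (k+1)))
      = ∑' k : ℕ, b * (b ^ k / Nat.factorial k) := by
    apply tsum_congr
    intro k
    have := this k
    push_cast at this ⊢
    exact this
  push_cast at h2 ⊢
  rw [h2, tsum_mul_left, ← real_exp_tsum]

lemma summable_weighted (ν b : ℝ) :
    Summable (fun k : ℕ => (ν + k + 1) * (b ^ k / Nat.factorial k)) := by
  have heq : (fun k : ℕ => (ν + k + 1) * (b ^ k / Nat.factorial k))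
      = fun k : ℕ => (ν + 1) * (b ^ k / Nat.factorial k) + (k:ℝ) * (b ^ k / Nat.factorial k) := by
    funext k; ring
  rw [heq]
  exact ((Real.summable_pow_div_factorial b).mul_left _).add (summable_mul_shift b)

lemma tsum_weighted (ν b : ℝ) :
    ∑' k : ℕ, (ν + k + 1) * (b ^ k / Nat.factorial k) = (ν + 1 + b) * Real.exp b := by
  have heq : (fun k : ℕ => (ν + k + 1) * (b ^ k / Nat.factorial k))
      = fun k : ℕ => (ν + 1) * (b ^ k / Nat.factorial k) + (k:ℝ) * (b ^ k / Nat.factorial k) := by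
    funext k; ring
  rw [heq, Summable.tsum_add ((Real.summable_pow_div_factorial b).mul_left _) (summable_mul_shift b),
    tsum_mul_left, ← real_exp_tsum, tsum_mul_shift]
  ring

lemma term_eqOn {ν : ℝ} (b : ℝ) (k : ℕ) : ∀ u ∈ Set.Ioi (0:ℝ),
    Real.exp (-u) * u ^ (ν+1) * ((b*u) ^ k / (Nat.factorial k * Real.Gamma (ν + k + 1)))
    = (b ^ k / (Nat.factorial k * Real.Gamma (ν + k + 1)))
        * (Real.exp (-u) * u ^ ((ν + k + 2) - 1)) := by
  intro u hu
  have hu' : (0:ℝ) < u := hu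
  rw [mul_pow, show ((ν + k + 2) - 1 : ℝ) = (ν+1) + (k:ℝ) by push_cast; ring,
    Real.rpow_add hu' (ν+1) (k:ℝ), Real.rpow_natCast]
  ring

lemma term_integrableOn {ν : ℝ} (hν : -1 < ν) (b : ℝ) (k : ℕ) :
    IntegrableOn (fun u : ℝ =>
      Real.exp (-u) * u ^ (ν+1) * ((b*u) ^ k / (Nat.factorial k * Real.Gamma (ν + k + 1))))
      (Set.Ioi 0) := by
  have h2 : (0:ℝ) < ν + k + 2 := by have := gamma_arg_pos hν k; linarith
  have := (Real.GammaIntegral_convergent h2).const_mul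
    (b ^ k / (Nat.factorial k * Real.Gamma (ν + k + 1)))
  have h3 : IntegrableOn (fun u : ℝ => (b ^ k / (Nat.factorial k * Real.Gamma (ν + k + 1)))
      * (Real.exp (-u) * u ^ ((ν + k + 2) - 1))) (Set.Ioi 0) := this
  exact h3.congr_fun (fun u hu => (term_eqOn b k u hu).symm) measurableSet_Ioi

lemma term_integral {ν : ℝ} (hν : -1 < ν) (b : ℝ) (k : ℕ) :
    ∫ u in Set.Ioi (0:ℝ),
      Real.exp (-u) * u ^ (ν+1) * ((b*u) ^ k / (Nat.factorial k * Real.Gamma (ν + k + 1)))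
    = (ν + k + 1) * (b ^ k / Nat.factorial k) := by
  have hpos := gamma_arg_pos hν k
  have hΓpos := gamma_pos hν k
  have hfac : (0:ℝ) < Nat.factorial k := by exact_mod_cast Nat.factorial_pos k
  have hΓeq : Real.Gamma (ν + k + 2) = (ν + k + 1) * Real.Gamma (ν + k + 1) := by
    rw [show (ν + k + 2 : ℝ) = (ν + k + 1) + 1 by ring]
    exact Real.Gamma_add_one hpos.ne'
  have hint : ∫ u in Set.Ioi (0:ℝ), Real.exp (-u) * u ^ ((ν + k + 2) - 1)
      = Real.Gamma (ν + k + 2) := (Real.Gamma_eq_integral (by linarith)).symm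
  rw [setIntegral_congr_fun measurableSet_Ioi (term_eqOn b k), integral_const_mul, hint, hΓeq]
  field_simp

lemma exists_hnu_neg {ν : ℝ} (hν : -1 < ν) : ∃ x : ℝ, 0 < x ∧ hnu ν (-x) < 0 := by
  by_contra hcon
  push_neg at hcon
  set c : ℝ := ν + 2 with hc
  have hc0 : 0 < c := by simp only [hc]; linarith
  set f : ℕ → ℝ → ℝ := fun k u =>
    Real.exp (-u) * u ^ (ν+1) * ((-c*u) ^ k / (Nat.factorial k * Real.Gamma (ν + k + 1)))
    with hf
  have hmeas : ∀ k, AEStronglyMeasurable (f k) (volume.restrict (Set.Ioi 0)) := by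
    intro k
    apply Measurable.aestronglyMeasurable
    fun_prop
  have hnormint : ∀ k, ∫ u in Set.Ioi (0:ℝ), ‖f k u‖ = (ν + k + 1) * (c ^ k / Nat.factorial k) := by
    intro k
    have heq : ∀ u ∈ Set.Ioi (0:ℝ), ‖f k u‖
        = Real.exp (-u) * u ^ (ν+1) * ((c*u) ^ k / (Nat.factorial k * Real.Gamma (ν + k + 1))) := by
      intro u hu
      have hu' : (0:ℝ) < u := hu
      have h1 : (0:ℝ) < u ^ (ν+1) := Real.rpow_pos_of_pos hu' _
      have hfac : (0:ℝ) < Nat.factorial k := by exact_mod_cast Nat.factorial_pos k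
      have hΓ := gamma_pos hν k
      have hfe : f k u = (-1:ℝ)^k * (Real.exp (-u) * u ^ (ν+1)
          * ((c*u) ^ k / (Nat.factorial k * Real.Gamma (ν + k + 1)))) := by
        simp only [hf]
        rw [show -c*u = -1*(c*u) by ring, mul_pow]
        ring
      rw [Real.norm_eq_abs, hfe, abs_mul, abs_pow, abs_neg, abs_one, one_pow, one_mul,
        abs_of_nonneg (by positivity)]
    rw [setIntegral_congr_fun measurableSet_Ioi heq, term_integral hν c k]
  have hnn : ∀ k : ℕ, 0 ≤ (ν + k + 1) * (c ^ k / Nat.factorial k) := by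
    intro k
    have := gamma_arg_pos hν k
    have hfac : (0:ℝ) < Nat.factorial k := by exact_mod_cast Nat.factorial_pos k
    positivity
  have hlint : ∀ k, ∫⁻ u in Set.Ioi (0:ℝ), ‖f k u‖₊
      = ENNReal.ofReal ((ν + k + 1) * (c ^ k / Nat.factorial k)) := by
    intro k
    have hint : IntegrableOn (f k) (Set.Ioi 0) := term_integrableOn hν (-c) k
    rw [← hnormint k]; exact (ofReal_integral_norm_eq_lintegral_enorm hint).symm
  have hne : ∑' k, ∫⁻ u in Set.Ioi (0:ℝ), ‖f k u‖₊ ≠ ⊤ := by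
    simp_rw [hlint]
    rw [← ENNReal.ofReal_tsum_of_nonneg hnn (summable_weighted ν c)]
    exact ENNReal.ofReal_ne_top
  have hswap := integral_tsum hmeas hne
  have hRHS : ∑' k, ∫ u in Set.Ioi (0:ℝ), f k u = (ν + 1 + (-c)) * Real.exp (-c) := by
    rw [tsum_congr (fun k => term_integral hν (-c) k)]
    exact tsum_weighted ν (-c)
  have hLHS : 0 ≤ ∫ u in Set.Ioi (0:ℝ), ∑' k, f k u := by
    apply setIntegral_nonneg measurableSet_Ioi
    intro u hu
    have hu' : (0:ℝ) < u := hu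
    have h1 : ∑' k, f k u = (Real.exp (-u) * u ^ (ν+1)) * hnu ν (-c*u) := by
      rw [hnu, ← tsum_mul_left]
    rw [h1]
    have h2 := hcon (c*u) (by positivity)
    have hE : 0 ≤ Real.exp (-u) * u ^ (ν+1) := by positivity
    rw [neg_mul]
    exact mul_nonneg hE h2
  rw [hswap, hRHS] at hLHS
  have hexp := Real.exp_pos (-c)
  have : ν + 1 + (-c) = -1 := by rw [hc]; ring
  rw [this] at hLHS
  nlinarith

lemma hnu_neg_continuousOn {ν : ℝ} (hν : -1 < ν) (M : ℝ) (hM : 0 ≤ M) :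
    ContinuousOn (fun x : ℝ => hnu ν (-x)) (Set.Icc 0 M) := by
  rw [continuousOn_iff_continuous_restrict]
  set c := min (Real.Gamma (ν + 1)) (Real.Gamma (ν + 2)) with hc
  have hcpos : 0 < c :=
    lt_min (Real.Gamma_pos_of_pos (by linarith)) (Real.Gamma_pos_of_pos (by linarith))
  have hres : Set.domRestrict (Set.Icc (0:ℝ) M) (fun x : ℝ => hnu ν (-x))
      = fun x : Set.Icc (0:ℝ) M =>
          ∑' k : ℕ, (-(x:ℝ)) ^ k / (Nat.factorial k * Real.Gamma (ν + k + 1)) := by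
    funext x; simp [hnu]
  rw [hres]
  apply continuous_tsum (u := fun k : ℕ => M ^ k / Nat.factorial k * (1/c))
  · intro k
    exact ((continuous_subtype_val.neg.pow k).div_const _)
  · exact (Real.summable_pow_div_factorial M).mul_right _
  · intro k x
    have hfac : (0:ℝ) < Nat.factorial k := by exact_mod_cast Nat.factorial_pos k
    have hΓ := gamma_pos hν k
    have hxb : |(-(x:ℝ))| ≤ M := by
      rw [abs_neg, abs_of_nonneg x.2.1]; exact x.2.2
    rw [Real.norm_eq_abs, abs_div, abs_pow, abs_of_pos (mul_pos hfac hΓ), mul_one_div, div_div]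
    exact div_le_div₀ (pow_nonneg hM k) (pow_le_pow_left₀ (abs_nonneg _) hxb k)
      (by positivity) (mul_le_mul_of_nonneg_left (gamma_lb hν k) hfac.le)

lemma exists_zero {ν : ℝ} (hν : -1 < ν) :
    ∃ s : ℝ, 0 < s ∧ hnu ν (-s) = 0 ∧ hnu ν (-(s/4)) ≠ 0 := by
  obtain ⟨x₀, hx₀, hneg⟩ := exists_hnu_neg hν
  have hcont := hnu_neg_continuousOn hν x₀ hx₀.le
  have h0 : 0 < hnu ν (-(0:ℝ)) := by rw [neg_zero]; exact hnu_pos hν le_rfl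
  set S := {x : ℝ | x ∈ Set.Icc 0 x₀ ∧ hnu ν (-x) = 0} with hS
  have hSne : S.Nonempty := by
    have him := intermediate_value_Icc' hx₀.le hcont
    have h0mem : (0:ℝ) ∈ Set.Icc (hnu ν (-x₀)) (hnu ν (-(0:ℝ))) := ⟨hneg.le, h0.le⟩
    obtain ⟨x, hx, hfx⟩ := him h0mem
    exact ⟨x, hx, hfx⟩
  have hSclosed : IsClosed S := by
    have : S = Set.Icc 0 x₀ ∩ (fun x : ℝ => hnu ν (-x)) ⁻¹' {0} := by
      ext y; simp [hS]
    rw [this]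
    exact hcont.preimage_isClosed_of_isClosed isClosed_Icc isClosed_singleton
  have hSbdd : BddBelow S := ⟨0, fun y hy => hy.1.1⟩
  set s := sInf S with hsdef
  have hsMem : s ∈ S := hSclosed.csInf_mem hSne hSbdd
  have hs0 : s ≠ 0 := by
    intro h
    have := hsMem.2
    rw [h] at this
    exact h0.ne' this
  have hspos : 0 < s := lt_of_le_of_ne hsMem.1.1 (Ne.symm hs0)
  refine ⟨s, hspos, hsMem.2, ?_⟩
  intro hzero
  have hmem : s/4 ∈ S := ⟨⟨by positivity, by linarith [hsMem.1.2]⟩, hzero⟩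
  have := csInf_le hSbdd hmem
  linarith

theorem stmt15 (ν : ℝ) (hν : -(1 / 2 : ℝ) < ν) :
    (∀ t : ℝ, hnu ν (-t ^ 2 / 4) ≠ 0 →
      Fext ν (t : ℂ) * Fext ν ((t : ℂ) * Complex.I) = 1) ∧
    ∀ μ : Measure ℝ, IsProbabilityMeasure μ →
      (∀ t : ℝ, charFn μ t = ((hnu ν (-t ^ 2 / 4) / hnu ν (t ^ 2 / 4) : ℝ) : ℂ)) →
      ¬ InfDivisible μ := by
  have hν1 : (-1:ℝ) < ν := by linarith
  constructor
  · exact fun t ht => part1 hν1 t ht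
  · intro μ hμ hchar hID
    obtain ⟨s, hs, hzero, hquarter⟩ := exists_zero hν1
    set t₀ : ℝ := 2 * Real.sqrt s with ht₀
    have hts : t₀ ^ 2 / 4 = s := by
      rw [ht₀, mul_pow, Real.sq_sqrt hs.le]; ring
    have hφ0 : charFn μ t₀ = 0 := by
      rw [hchar t₀, show -t₀ ^ 2 / 4 = -s by rw [neg_div, hts], hzero, zero_div,
        Complex.ofReal_zero]
    have hq0 : (t₀/2) ^ 2 / 4 = s/4 := by
      rw [show ((t₀/2) ^ 2 / 4 : ℝ) = (t₀ ^ 2 / 4)/4 by ring, hts]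
    have hden : 0 < hnu ν (s/4) := hnu_pos hν1 (by positivity)
    have hφh : charFn μ (t₀/2) = ((hnu ν (-(s/4)) / hnu ν (s/4) : ℝ) : ℂ) := by
      rw [hchar (t₀/2), show -(t₀/2) ^ 2 / 4 = -(s/4) by rw [neg_div, hq0], hq0]
    have hφhne : charFn μ (t₀/2) ≠ 0 := by
      rw [hφh]
      exact_mod_cast div_ne_zero hquarter hden.ne'
    set a := ‖charFn μ (t₀/2)‖ with ha
    have ha0 : 0 < a := norm_pos_iff.mpr hφhne
    obtain ⟨m, hm⟩ := exists_pow_lt_of_lt_one ha0 (by norm_num : (0.9:ℝ) < 1)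
    set n := max m 1 with hn
    have hn1 : 1 ≤ n := le_max_right m 1
    have hpow : (0.9:ℝ) ^ n < a :=
      lt_of_le_of_lt (pow_le_pow_of_le_one (by norm_num) (by norm_num) (le_max_left m 1)) hm
    obtain ⟨ρ, hρ, hconv⟩ := hID n hn1
    haveI := hρ
    have hcp := charFn_convPow ρ n
    have h0 : charFn ρ t₀ = 0 := by
      have h := hcp t₀
      rw [hconv, hφ0] at h
      exact (pow_eq_zero_iff (by omega : n ≠ 0)).mp h.symm
    have hx : ‖charFn ρ (t₀/2)‖ ^ n = a := by
      rw [ha, ← hconv, hcp (t₀/2), norm_pow]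
    have hkey := charFn_double_ineq ρ (t₀/2)
    rw [show 2 * (t₀/2) = t₀ by ring, h0, norm_zero] at hkey
    set x := ‖charFn ρ (t₀/2)‖ with hxdef
    have hx0 : 0 ≤ x := norm_nonneg _
    have hx9 : x ≤ 0.9 := by nlinarith
    have hle : a ≤ (0.9:ℝ) ^ n := by rw [← hx]; exact pow_le_pow_left₀ hx0 hx9 n
    linarith
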